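/- There is no probability distribution p on quadruples (a, b, u, w) ∈ {0,1}⁴ whose four pairwise marginals reproduce the Born-rule predictions of the Hardy state ψ₀ = (1/√3)(|00⟩+|10⟩+|11⟩), namely: for all a,b ∈ {0,1}, the (a,b)-marginal equals |⟨v_a ⊗ v_b, ψ₀⟩|²; for all a,w, the (a,w)-marginal equals |⟨v_a ⊗ e_w, ψ₀⟩|²; for all u,b, the (u,b)-marginal equals |⟨e_u ⊗ v_b, ψ₀⟩|²; and for all u,w, the (u,w)-marginal equals |⟨e_u ⊗ e_w, ψ₀⟩|², where e₀, e₁ is the standard basis of ℂ² and v₀ = |+⟩, v₁ = |−⟩. (This is the mathematical core of Theorem 1: if all four outcomes a, b, u, w of the black-hole protocol coexist on a single spatial slice with quantum-theoretic pairwise statistics, a contradiction follows.) -/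

import Mathlib

open Complex

/-- Standard basis of ℂ²: `ket k` is `|k⟩` (written `e_k`). -/
noncomputable def ket (k : Fin 2) : Fin 2 → ℂ := fun i => if i = k then 1 else 0

/-- The X-basis: `xket 0 = |+⟩ = (|0⟩+|1⟩)/√2`, `xket 1 = |−⟩ = (|0⟩−|1⟩)/√2`
(written `v₀ = |+⟩`, `v₁ = |−⟩`). -/
noncomputable def xket (k : Fin 2) : Fin 2 → ℂ := fun i =>
  (ket 0 i + (if k = 0 then 1 else -1) * ket 1 i) / (Real.sqrt 2 : ℂ)

/-- The Hardy state `ψ₀ = (1/√3)(|00⟩ + |10⟩ + |11⟩)` on ℂ² ⊗ ℂ². -/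
noncomputable def hardyState : Fin 2 × Fin 2 → ℂ := fun p =>
  (ket 0 p.1 * ket 0 p.2 + ket 1 p.1 * ket 0 p.2 + ket 1 p.1 * ket 1 p.2) / (Real.sqrt 3 : ℂ)

/-- Born probability of the product effect `φ ⊗ χ` on the Hardy state. -/
noncomputable def bornHardy (φ χ : Fin 2 → ℂ) : ℝ :=
  ‖∑ i : Fin 2, ∑ j : Fin 2, (starRingEnd ℂ) (φ i * χ j) * hardyState (i, j)‖ ^ 2

lemma e2 : (Real.sqrt 2 : ℂ) * (Real.sqrt 2 : ℂ) = 2 := by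
  rw [← Complex.ofReal_mul, Real.mul_self_sqrt (by norm_num)]; norm_num

lemma born11 : bornHardy (xket 1) (xket 1) = 1/12 := by
  simp only [bornHardy, hardyState, xket, ket, Fin.sum_univ_two]
  norm_num [map_div₀, Complex.conj_ofReal]
  rw [show ((Real.sqrt 2:ℂ))⁻¹ * (↑(Real.sqrt 2))⁻¹ * (↑(Real.sqrt 3))⁻¹ +
      (-1 / ↑(Real.sqrt 2) * (↑(Real.sqrt 2))⁻¹ * (↑(Real.sqrt 3))⁻¹ +
       -1 / ↑(Real.sqrt 2) * (-1 / ↑(Real.sqrt 2)) * (↑(Real.sqrt 3))⁻¹)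
      = (((Real.sqrt 3)⁻¹/2 : ℝ) : ℂ) by
    push_cast
    field_simp
    rw [sq, e2]; ring]
  rw [Complex.norm_real, Real.norm_eq_abs, _root_.abs_of_nonneg (by positivity), div_pow,
    ← Real.sqrt_inv, Real.sq_sqrt (by positivity)]
  norm_num

lemma born_xe10 : bornHardy (xket 1) (ket 0) = 0 := by
  simp only [bornHardy, hardyState, xket, ket, Fin.sum_univ_two]
  norm_num [map_div₀, Complex.conj_ofReal]
  ring_nf

lemma born_ex11 : bornHardy (ket 1) (xket 1) = 0 := by
  simp only [bornHardy, hardyState, xket, ket, Fin.sum_univ_two]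
  norm_num [map_div₀, Complex.conj_ofReal]
  ring_nf

lemma born_ee01 : bornHardy (ket 0) (ket 1) = 0 := by
  simp only [bornHardy, hardyState, xket, ket, Fin.sum_univ_two]
  norm_num [map_div₀, Complex.conj_ofReal]

/-- There is no probability distribution on quadruples `(a, b, u, w) ∈ {0,1}⁴` whose four
pairwise marginals reproduce the Born-rule predictions of the Hardy state: the `(a,b)`
marginal for `v_a ⊗ v_b`, the `(a,w)` marginal for `v_a ⊗ e_w`, the `(u,b)` marginal for
`e_u ⊗ v_b`, and the `(u,w)` marginal for `e_u ⊗ e_w`. -/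
theorem no_joint_distribution_hardy :
    ¬ ∃ p : Fin 2 × Fin 2 × Fin 2 × Fin 2 → ℝ,
      (∀ s, 0 ≤ p s) ∧
      (∑ s : Fin 2 × Fin 2 × Fin 2 × Fin 2, p s = 1) ∧
      (∀ a b : Fin 2, ∑ u : Fin 2, ∑ w : Fin 2, p (a, b, u, w)
          = bornHardy (xket a) (xket b)) ∧
      (∀ a w : Fin 2, ∑ b : Fin 2, ∑ u : Fin 2, p (a, b, u, w)
          = bornHardy (xket a) (ket w)) ∧
      (∀ u b : Fin 2, ∑ a : Fin 2, ∑ w : Fin 2, p (a, b, u, w)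
          = bornHardy (ket u) (xket b)) ∧
      (∀ u w : Fin 2, ∑ a : Fin 2, ∑ b : Fin 2, p (a, b, u, w)
          = bornHardy (ket u) (ket w)) := by
  rintro ⟨p, hpos, -, hAB, hAW, hUB, hUW⟩
  have h1 := hAW 1 0
  have h2 := hUB 1 1
  have h3 := hUW 0 1
  have h4 := hAB 1 1
  rw [born_xe10] at h1
  rw [born_ex11] at h2
  rw [born_ee01] at h3
  rw [born11] at h4
  simp only [Fin.sum_univ_two] at h1 h2 h3 h4
  linarith [hpos (1,0,0,0), hpos (1,0,1,0), hpos (1,1,0,0), hpos (1,1,1,0),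
    hpos (0,1,1,0), hpos (0,1,1,1), hpos (1,1,1,1),
    hpos (0,0,0,1), hpos (0,1,0,1), hpos (1,0,0,1), hpos (1,1,0,1)]
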